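/- Unit regularity of the real t-product ring: the ring (ℝ^{n×n×p}, +, *) is unit regular, i.e., for every A ∈ ℝ^{n×n×p} there exists an invertible W ∈ ℝ^{n×n×p} such that A * W * A = A. -/

import Mathlib

open Matrix Complex BigOperators Kronecker

/-- A third-order tensor, represented by its frontal slices (indexed cyclically). -/
abbrev Tensor (F : Type*) (m n p : ℕ) : Type _ :=
  ZMod p → Matrix (Fin m) (Fin n) F

/-- The block-circulant matrix of a tensor: block (i,j) is slice (i - j mod p). -/
def bcirc {F : Type*} {m n p : ℕ} (A : Tensor F m n p) :
    Matrix (ZMod p × Fin m) (ZMod p × Fin n) F :=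
  Matrix.of fun ir jc => A (ir.1 - jc.1) ir.2 jc.2

/-- The t-product of tensors: (A*B)^{(i)} = ∑_j A^{(i-j)} B^{(j)}. -/
def tpr {F : Type*} [CommRing F] {m n l p : ℕ} [NeZero p]
    (A : Tensor F m n p) (B : Tensor F n l p) : Tensor F m l p :=
  fun i => ∑ j : ZMod p, A (i - j) * B j

/-- The identity tensor: first frontal slice is I_n, others are zero. -/
def tId (F : Type*) [CommRing F] (n p : ℕ) [NeZero p] : Tensor F n n p :=
  fun i => if i = 0 then 1 else 0

/-- Tensor transpose: transpose each slice and reverse the order of slices 2..p. -/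
def tT {F : Type*} {m n p : ℕ} (A : Tensor F m n p) : Tensor F n m p :=
  fun i => (A (-i))ᵀ

/-- ξ = e^{-2πi/p}. -/
noncomputable def xi (p : ℕ) : ℂ :=
  Complex.exp (-(2 * Real.pi * Complex.I) / p)

/-- The normalized DFT matrix of order p. -/
noncomputable def Fmat (p : ℕ) : Matrix (ZMod p) (ZMod p) ℂ :=
  Matrix.of fun j k => (1 / (Real.sqrt p : ℂ)) * xi p ^ (j.val * k.val)

/-- The Fourier blocks of a complex tensor: A_i = ∑_k ξ^{(i)(k)} A^{(k)} (0-based). -/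
noncomputable def fblock {m n p : ℕ} [NeZero p] (A : Tensor ℂ m n p) (i : ZMod p) :
    Matrix (Fin m) (Fin n) ℂ :=
  ∑ k : ZMod p, xi p ^ (i.val * k.val) • A k

/-- Complexification of a real tensor. -/
def cplx {m n p : ℕ} (A : Tensor ℝ m n p) : Tensor ℂ m n p :=
  fun i => (A i).map (Complex.ofReal)

/-- Block diagonal matrix with p equal-size blocks. -/
def blockDiag {m n p : ℕ} (M : ZMod p → Matrix (Fin m) (Fin n) ℂ) :
    Matrix (ZMod p × Fin m) (ZMod p × Fin n) ℂ :=
  Matrix.of fun ir jc => if ir.1 = jc.1 then M ir.1 ir.2 jc.2 else 0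

/-- Entrywise conjugation of a complex matrix. -/
def conjM {m n : ℕ} (M : Matrix (Fin m) (Fin n) ℂ) : Matrix (Fin m) (Fin n) ℂ :=
  M.map (starRingEnd ℂ)

/-- A complex matrix is real if all entries have zero imaginary part. -/
def IsRealM {m n : ℕ} (M : Matrix (Fin m) (Fin n) ℂ) : Prop :=
  ∀ r c, (M r c).im = 0

set_option maxHeartbeats 1000000
set_option synthInstance.maxHeartbeats 400000
set_option linter.unusedSectionVars false

noncomputable def chi (p : ℕ) (m : ZMod p) : ℂ := xi p ^ m.val

section chi
variable {p : ℕ} [NeZero p]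

lemma xi_prim : IsPrimitiveRoot (xi p) p := by
  have h := Complex.isPrimitiveRoot_exp p (NeZero.ne p)
  have hx : xi p = (Complex.exp (2 * Real.pi * Complex.I / p))⁻¹ := by
    rw [xi, ← Complex.exp_neg, neg_div]
  rw [hx]; exact h.inv

lemma xi_pow_p : xi p ^ p = 1 := xi_prim.pow_eq_one

lemma xi_pow_nat (a : ℕ) : xi p ^ a = chi p (a : ZMod p) := by
  conv_lhs => rw [← Nat.div_add_mod a p]
  rw [pow_add, pow_mul, xi_pow_p, one_pow, one_mul, chi, ZMod.val_natCast]

lemma chi_add (a b : ZMod p) : chi p (a + b) = chi p a * chi p b := by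
  show xi p ^ ((a + b).val) = xi p ^ a.val * xi p ^ b.val
  rw [← pow_add, xi_pow_nat ((a + b).val), xi_pow_nat (a.val + b.val)]
  congr 1
  push_cast [ZMod.natCast_val, ZMod.cast_id]
  ring

lemma chi_zero : chi p 0 = 1 := by simp [chi, ZMod.val_zero]

lemma chi_neg (m : ZMod p) : chi p (-m) = (chi p m)⁻¹ :=
  eq_inv_of_mul_eq_one_right (by rw [← chi_add]; simp [chi_zero])

lemma conj_xi : (starRingEnd ℂ) (xi p) = (xi p)⁻¹ := by
  rw [xi, ← Complex.exp_conj, ← Complex.exp_neg]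
  congr 1
  simp [map_div₀, Complex.conj_I, map_ofNat]
  ring

lemma conj_chi (m : ZMod p) : (starRingEnd ℂ) (chi p m) = chi p (-m) := by
  rw [chi, map_pow, conj_xi, inv_pow, chi_neg, chi]

lemma chi_mul_eq_pow (i m : ZMod p) : chi p (i * m) = (chi p m) ^ i.val := by
  show xi p ^ ((i * m).val) = (xi p ^ m.val) ^ i.val
  rw [← pow_mul, xi_pow_nat ((i * m).val), xi_pow_nat (m.val * i.val)]
  congr 1
  push_cast [ZMod.natCast_val, ZMod.cast_id]
  ring

lemma sum_chi (m : ZMod p) :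
    ∑ i : ZMod p, chi p (i * m) = if m = 0 then (p : ℂ) else 0 := by
  obtain ⟨k, rfl⟩ : ∃ k, p = k + 1 := ⟨p - 1, (Nat.succ_pred_eq_of_pos (NeZero.pos p)).symm⟩
  have hsum : ∑ i : ZMod (k+1), chi (k+1) (i * m)
      = ∑ t ∈ Finset.range (k+1), (chi (k+1) m) ^ t := by
    rw [show (∑ i : ZMod (k+1), chi (k+1) (i * m)) = ∑ i : Fin (k+1), (chi (k+1) m) ^ (i : Fin (k+1)).val from
      Finset.sum_congr rfl (fun i _ => chi_mul_eq_pow i m), Fin.sum_univ_eq_sum_range]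
  rw [hsum]
  by_cases hm : m = 0
  · simp [hm, chi_zero]
  · rw [if_neg hm]
    have hζ1 : chi (k+1) m ≠ 1 := by
      rw [chi]
      exact xi_prim.pow_ne_one_of_pos_of_lt (ZMod.val_pos.mpr hm).ne' (ZMod.val_lt m)
    have hζp : (chi (k+1) m) ^ (k+1) = 1 := by
      rw [chi, ← pow_mul, mul_comm, pow_mul, xi_pow_p, one_pow]
    rw [geom_sum_eq hζ1, hζp]
    simp

lemma val_inj {a b : ZMod p} (h : a.val = b.val) : a = b := by
  have := congrArg (fun t : ℕ => (t : ZMod p)) h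
  simpa [ZMod.natCast_val, ZMod.cast_id] using this

end chi

section fb
variable {n p : ℕ} [NeZero p]

/-- unnormalized DFT of a tensor -/
noncomputable def fb (A : Tensor ℂ n n p) (i : ZMod p) : Matrix (Fin n) (Fin n) ℂ :=
  ∑ k : ZMod p, chi p (i * k) • A k

/-- inverse DFT -/
noncomputable def ib (N : ZMod p → Matrix (Fin n) (Fin n) ℂ) : Tensor ℂ n n p :=
  fun k => (p : ℂ)⁻¹ • ∑ i : ZMod p, chi p (-(i * k)) • N i

lemma pC_ne : ((p : ℂ)) ≠ 0 := by
  exact_mod_cast Nat.cast_ne_zero.mpr (NeZero.ne p)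

lemma fb_apply (A : Tensor ℂ n n p) (i : ZMod p) (r c : Fin n) :
    fb A i r c = ∑ k : ZMod p, chi p (i * k) * A k r c := by
  simp [fb, Matrix.sum_apply]

lemma ib_apply (N : ZMod p → Matrix (Fin n) (Fin n) ℂ) (k : ZMod p) (r c : Fin n) :
    ib N k r c = (p : ℂ)⁻¹ * ∑ i : ZMod p, chi p (-(i * k)) * N i r c := by
  simp [ib, Matrix.sum_apply]

lemma fb_ib (N : ZMod p → Matrix (Fin n) (Fin n) ℂ) (j : ZMod p) :
    fb (ib N) j = N j := by
  ext r c
  rw [fb_apply]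
  calc ∑ k : ZMod p, chi p (j * k) * (ib N k r c)
      = ∑ k : ZMod p, ∑ i : ZMod p, (p:ℂ)⁻¹ * (chi p (k * (j - i)) * N i r c) := by
        refine Finset.sum_congr rfl fun k _ => ?_
        rw [ib_apply, Finset.mul_sum, Finset.mul_sum]
        refine Finset.sum_congr rfl fun i _ => ?_
        have hχ : chi p (k * (j - i)) = chi p (j * k) * chi p (-(i * k)) := by
          rw [← chi_add]; congr 1; ring
        rw [hχ]; ring
    _ = ∑ i : ZMod p, ∑ k : ZMod p, (p:ℂ)⁻¹ * (chi p (k * (j - i)) * N i r c) :=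
        Finset.sum_comm
    _ = N j r c := by
        have hterm : ∀ i : ZMod p, (∑ k : ZMod p, (p:ℂ)⁻¹ * (chi p (k * (j - i)) * N i r c))
            = if i = j then N j r c else 0 := by
          intro i
          rw [← Finset.mul_sum, ← Finset.sum_mul, sum_chi]
          by_cases h : i = j
          · subst h
            simp [sub_self, chi_zero, ← mul_assoc, inv_mul_cancel₀ (pC_ne (p := p))]
          · have hne : j - i ≠ 0 := sub_ne_zero.mpr (Ne.symm h)
            simp [hne, h]
        rw [Finset.sum_congr rfl fun i _ => hterm i, Finset.sum_ite_eq' Finset.univ j]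
        simp

lemma ib_fb (A : Tensor ℂ n n p) (k : ZMod p) :
    ib (fb A) k = A k := by
  ext r c
  rw [ib_apply]
  calc (p:ℂ)⁻¹ * ∑ i : ZMod p, chi p (-(i * k)) * fb A i r c
      = (p:ℂ)⁻¹ * ∑ i : ZMod p, ∑ j : ZMod p, chi p (i * (j - k)) * A j r c := by
        congr 1
        refine Finset.sum_congr rfl fun i _ => ?_
        rw [fb_apply, Finset.mul_sum]
        refine Finset.sum_congr rfl fun j _ => ?_
        have hχ : chi p (i * (j - k)) = chi p (-(i * k)) * chi p (i * j) := by
          rw [← chi_add]; congr 1; ring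
        rw [hχ]; ring
    _ = A k r c := by
        rw [Finset.sum_comm]
        have hterm : ∀ j : ZMod p, (∑ i : ZMod p, chi p (i * (j - k)) * A j r c)
            = if j = k then (p:ℂ) * A k r c else 0 := by
          intro j
          rw [← Finset.sum_mul, sum_chi]
          by_cases h : j = k
          · simp [h]
          · have hne : j - k ≠ 0 := sub_ne_zero.mpr h
            simp [hne, h]
        rw [Finset.sum_congr rfl fun j _ => hterm j, Finset.sum_ite_eq' Finset.univ k]
        simp [← mul_assoc, inv_mul_cancel₀ (pC_ne (p := p))]

lemma fb_mul (A B : Tensor ℂ n n p) (i : ZMod p) :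
    fb (tpr A B) i = fb A i * fb B i := by
  unfold fb tpr
  rw [Finset.sum_mul_sum]
  have lhs : ∑ k : ZMod p, chi p (i * k) • ∑ j : ZMod p, A (k - j) * B j
      = ∑ k : ZMod p, ∑ j : ZMod p, chi p (i * k) • (A (k - j) * B j) := by
    exact Finset.sum_congr rfl (fun k _ => Finset.smul_sum)
  rw [lhs]
  have rhs : ∀ a b : ZMod p, (chi p (i * a) • A a) * (chi p (i * b) • B b)
      = chi p (i * (a + b)) • (A a * B b) := by
    intro a b
    rw [Matrix.smul_mul, Matrix.mul_smul, smul_smul, ← chi_add, ← mul_add]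
  rw [Finset.sum_congr rfl (fun a _ => Finset.sum_congr rfl (fun b _ => rhs a b))]
  rw [← Fintype.sum_prod_type (f := fun x : ZMod p × ZMod p => chi p (i * (x.1 + x.2)) • (A x.1 * B x.2))]
  rw [← Fintype.sum_prod_type (f := fun x : ZMod p × ZMod p => chi p (i * x.1) • (A (x.1 - x.2) * B x.2))]
  refine (Fintype.sum_equiv (⟨fun x : ZMod p × ZMod p => (x.1 + x.2, x.2),
    fun y => (y.1 - y.2, y.2), fun x => by simp, fun y => by simp⟩ : ZMod p × ZMod p ≃ ZMod p × ZMod p)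
    _ _ fun x => ?_).symm
  simp

lemma fb_tId (i : ZMod p) : fb (cplx (tId ℝ n p)) i = 1 := by
  unfold fb cplx tId
  have : ∀ k : ZMod p, chi p (i * k) • ((if k = 0 then (1 : Matrix (Fin n) (Fin n) ℝ) else 0).map Complex.ofReal)
      = if k = 0 then (1 : Matrix (Fin n) (Fin n) ℂ) else 0 := by
    intro k
    by_cases h : k = 0
    · simp [h, chi_zero, Matrix.map_one Complex.ofReal Complex.ofReal_zero Complex.ofReal_one]
    · simp [h, Matrix.map_zero Complex.ofReal Complex.ofReal_zero]
  rw [Finset.sum_congr rfl (fun k _ => this k), Finset.sum_ite_eq' Finset.univ 0]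
  simp

lemma cplx_tpr (A B : Tensor ℝ n n p) : cplx (tpr A B) = tpr (cplx A) (cplx B) := by
  funext i
  unfold cplx tpr
  rw [show ((∑ j : ZMod p, A (i - j) * B j).map Complex.ofReal)
      = ∑ j : ZMod p, (A (i - j) * B j).map Complex.ofReal from ?_]
  · apply Finset.sum_congr rfl
    intro j _
    exact Matrix.map_mul (f := Complex.ofRealHom)
  · ext r c
    simp [Matrix.map_apply, Matrix.sum_apply]

lemma cplx_inj {A B : Tensor ℝ n n p} (h : cplx A = cplx B) : A = B := by
  funext i r c
  have := congrFun h i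
  have := congrArg (fun M => M r c) this
  simpa [cplx, Matrix.map_apply, Complex.ofReal_inj] using this

lemma fb_cplx_inj {A B : Tensor ℝ n n p} (h : ∀ i, fb (cplx A) i = fb (cplx B) i) : A = B := by
  apply cplx_inj
  funext k
  rw [← ib_fb (cplx A) k, ← ib_fb (cplx B) k]
  unfold ib
  congr 1
  exact Finset.sum_congr rfl (fun i _ => by rw [h i])

end fb

lemma exists_unit_reg {F : Type*} [Field F] {n : ℕ} (M : Matrix (Fin n) (Fin n) F) :
    ∃ U V : Matrix (Fin n) (Fin n) F, U * V = 1 ∧ V * U = 1 ∧ M * U * M = M := by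
  classical
  set f : (Fin n → F) →ₗ[F] (Fin n → F) := Matrix.toLin' M with hf
  obtain ⟨C, hKC⟩ := (LinearMap.ker f).exists_isCompl
  obtain ⟨D, hRD⟩ := (LinearMap.range f).exists_isCompl
  -- ψ : range f ≃ C with f (ψ r) = r
  let ψ : LinearMap.range f ≃ₗ[F] C :=
    (f.quotKerEquivRange.symm.trans (Submodule.quotientEquivOfIsCompl _ C hKC))
  have hψ : ∀ r : LinearMap.range f, f (ψ r) = r := by
    intro r
    have h1 : (Submodule.Quotient.mk (ψ r : Fin n → F) : (Fin n → F) ⧸ LinearMap.ker f)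
        = f.quotKerEquivRange.symm r := by
      rw [← Submodule.quotientEquivOfIsCompl_symm_apply _ C hKC]
      simp [ψ]
    have := congrArg f.quotKerEquivRange h1
    rw [LinearEquiv.apply_symm_apply] at this
    have h2 : f.quotKerEquivRange (Submodule.Quotient.mk (ψ r : Fin n → F)) = ⟨f (ψ r), by simp⟩ := rfl
    rw [h2] at this
    exact congrArg Subtype.val this
  have hfd : FiniteDimensional F (Fin n → F) := inferInstance
  have hdim : Module.finrank F D = Module.finrank F (LinearMap.ker f) := by
    have h1 := LinearMap.finrank_range_add_finrank_ker f
    have h2 := Submodule.finrank_add_eq_of_isCompl hRD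
    have h3 := Submodule.finrank_add_eq_of_isCompl hKC
    omega
  let χ : D ≃ₗ[F] LinearMap.ker f := LinearEquiv.ofFinrankEq _ _ hdim
  let g : (Fin n → F) ≃ₗ[F] (Fin n → F) :=
    ((Submodule.prodEquivOfIsCompl _ D hRD).symm.trans (ψ.prodCongr χ)).trans
      ((Submodule.prodEquivOfIsCompl C (LinearMap.ker f) hKC.symm))
  have hg : ∀ v, f (g (f v)) = f v := by
    intro v
    have hmem : f v ∈ LinearMap.range f := ⟨v, rfl⟩
    have he : (Submodule.prodEquivOfIsCompl _ D hRD).symm (f v) = (⟨f v, hmem⟩, 0) := by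
      rw [LinearEquiv.symm_apply_eq]
      simp [Submodule.coe_prodEquivOfIsCompl']
    have : g (f v) = (ψ ⟨f v, hmem⟩ : Fin n → F) := by
      simp only [g, LinearEquiv.trans_apply, he]
      show ((ψ ⟨f v, hmem⟩ : Fin n → F) + ((χ 0 : _) : Fin n → F)) = _
      simp
    rw [this, hψ]
  refine ⟨LinearMap.toMatrix' (g : (Fin n → F) →ₗ[F] (Fin n → F)),
    LinearMap.toMatrix' (g.symm : (Fin n → F) →ₗ[F] (Fin n → F)), ?_, ?_, ?_⟩
  · rw [← LinearMap.toMatrix'_comp, show (1 : Matrix (Fin n) (Fin n) F) = LinearMap.toMatrix' LinearMap.id from (LinearMap.toMatrix'_id).symm]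
    congr 1
    ext v : 1
    simp
  · rw [← LinearMap.toMatrix'_comp, show (1 : Matrix (Fin n) (Fin n) F) = LinearMap.toMatrix' LinearMap.id from (LinearMap.toMatrix'_id).symm]
    congr 1
    ext v : 1
    simp
  · have hM : M = LinearMap.toMatrix' f := by simp [hf]
    rw [hM, ← LinearMap.toMatrix'_comp, ← LinearMap.toMatrix'_comp]
    congr 1
    refine LinearMap.ext fun v => ?_
    exact hg v

section real
variable {n p : ℕ} [NeZero p]

lemma ib_real (N : ZMod p → Matrix (Fin n) (Fin n) ℂ)
    (hs : ∀ i, N (-i) = (N i).map (starRingEnd ℂ)) (k : ZMod p) (r c : Fin n) :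
    (starRingEnd ℂ) (ib N k r c) = ib N k r c := by
  rw [ib_apply, _root_.map_mul, map_sum]
  have h1 : (starRingEnd ℂ) ((p : ℂ))⁻¹ = ((p : ℂ))⁻¹ := by
    rw [map_inv₀, Complex.conj_natCast]
  rw [h1]
  congr 1
  have h2 : ∀ i : ZMod p, (starRingEnd ℂ) (chi p (-(i * k)) * N i r c)
      = chi p (-(-i * k)) * N (-i) r c := by
    intro i
    rw [_root_.map_mul, conj_chi, neg_neg]
    congr 1
    · congr 1; ring
    · rw [hs i, Matrix.map_apply]
  rw [Finset.sum_congr rfl fun i _ => h2 i]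
  exact Fintype.sum_equiv (Equiv.neg (ZMod p)) _ _ (fun i => rfl)

lemma mapR_mul {m : ℕ} (X Y : Matrix (Fin m) (Fin m) ℝ) :
    (X * Y).map Complex.ofReal = X.map Complex.ofReal * Y.map Complex.ofReal :=
  Matrix.map_mul (f := Complex.ofRealHom)

lemma mapC_mul {m : ℕ} (X Y : Matrix (Fin m) (Fin m) ℂ) :
    (X * Y).map (starRingEnd ℂ) = X.map (starRingEnd ℂ) * Y.map (starRingEnd ℂ) :=
  Matrix.map_mul (f := starRingEnd ℂ)

lemma mapR_one {m : ℕ} : (1 : Matrix (Fin m) (Fin m) ℝ).map Complex.ofReal = 1 :=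
  Matrix.map_one _ Complex.ofReal_zero Complex.ofReal_one

lemma mapC_one {m : ℕ} : (1 : Matrix (Fin m) (Fin m) ℂ).map (starRingEnd ℂ) = 1 :=
  Matrix.map_one _ (map_zero _) (map_one _)

lemma conj_map_ofReal {m : ℕ} (X : Matrix (Fin m) (Fin m) ℝ) :
    (X.map Complex.ofReal).map (starRingEnd ℂ) = X.map Complex.ofReal := by
  ext r c; simp [Matrix.map_apply, Complex.conj_ofReal]

lemma conj_conj_map {m : ℕ} (X : Matrix (Fin m) (Fin m) ℂ) :
    (X.map (starRingEnd ℂ)).map (starRingEnd ℂ) = X := by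
  ext r c; simp [Matrix.map_apply]

end real

theorem stmt11 {n p : ℕ} [NeZero p] :
    ∀ A : Tensor ℝ n n p, ∃ W Winv : Tensor ℝ n n p,
      tpr W Winv = tId ℝ n p ∧ tpr Winv W = tId ℝ n p ∧
      tpr A (tpr W A) = A := by
  intro A
  classical
  choose uC vC hC1 hC2 hC3 using fun M : Matrix (Fin n) (Fin n) ℂ => exists_unit_reg M
  choose uR vR hR1 hR2 hR3 using fun M : Matrix (Fin n) (Fin n) ℝ => exists_unit_reg M
  set M : ZMod p → Matrix (Fin n) (Fin n) ℂ := fun i => fb (cplx A) i with hM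
  have hMsym : ∀ i, M (-i) = (M i).map (starRingEnd ℂ) := by
    intro i
    ext r c
    rw [Matrix.map_apply]
    show fb (cplx A) (-i) r c = (starRingEnd ℂ) (fb (cplx A) i r c)
    rw [fb_apply, fb_apply, map_sum]
    refine Finset.sum_congr rfl fun k _ => ?_
    rw [_root_.map_mul, conj_chi, neg_mul]
    congr 1
    simp [cplx, Matrix.map_apply, Complex.conj_ofReal]
  have hMreal : ∀ i, -i = i → ((M i).map Complex.re).map Complex.ofReal = M i := by
    intro i h
    have := hMsym i
    rw [h] at this
    ext r c
    have h2 : M i r c = (starRingEnd ℂ) (M i r c) := by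
      nth_rewrite 1 [this]; rfl
    simp only [Matrix.map_apply]
    exact Complex.conj_eq_iff_re.mp h2.symm
  set N : ZMod p → Matrix (Fin n) (Fin n) ℂ := fun i =>
    if -i = i then (uR ((M i).map Complex.re)).map Complex.ofReal
    else if i.val < (-i).val then uC (M i) else (uC (M (-i))).map (starRingEnd ℂ) with hN
  set Ninv : ZMod p → Matrix (Fin n) (Fin n) ℂ := fun i =>
    if -i = i then (vR ((M i).map Complex.re)).map Complex.ofReal
    else if i.val < (-i).val then vC (M i) else (vC (M (-i))).map (starRingEnd ℂ) with hNinv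
  have key : ∀ i, (M i * N i * M i = M i) ∧ (N i * Ninv i = 1) ∧ (Ninv i * N i = 1) ∧
      (N (-i) = (N i).map (starRingEnd ℂ)) ∧ (Ninv (-i) = (Ninv i).map (starRingEnd ℂ)) := by
    intro i
    by_cases h1 : -i = i
    · have hNi : N i = (uR ((M i).map Complex.re)).map Complex.ofReal := by
        rw [hN]; simp only [if_pos h1]
      have hNinvi : Ninv i = (vR ((M i).map Complex.re)).map Complex.ofReal := by
        rw [hNinv]; simp only [if_pos h1]
      set R := (M i).map Complex.re with hR
      have hMi : M i = R.map Complex.ofReal := (hMreal i h1).symm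
      refine ⟨?_, ?_, ?_, ?_, ?_⟩
      · rw [hNi, hMi, ← mapR_mul, ← mapR_mul, hR3, ← hMi]
      · rw [hNi, hNinvi, ← mapR_mul, hR1, mapR_one]
      · rw [hNi, hNinvi, ← mapR_mul, hR2, mapR_one]
      · rw [h1, hNi, conj_map_ofReal]
      · rw [h1, hNinvi, conj_map_ofReal]
    · have hvalne : i.val ≠ (-i).val := fun h => h1 (val_inj h.symm)
      have hc1' : ¬(-(-i) = -i) := fun h => h1 (by rw [neg_neg] at h; exact h.symm)
      by_cases h2 : i.val < (-i).val
      · have hNi : N i = uC (M i) := by rw [hN]; simp only [if_neg h1, if_pos h2]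
        have hNinvi : Ninv i = vC (M i) := by rw [hNinv]; simp only [if_neg h1, if_pos h2]
        have h2' : ¬((-i).val < (-(-i)).val) := by rw [neg_neg]; omega
        have hNni : N (-i) = (uC (M (-(-i)))).map (starRingEnd ℂ) := by
          rw [hN]; simp only [if_neg hc1', if_neg h2']
        have hNinvni : Ninv (-i) = (vC (M (-(-i)))).map (starRingEnd ℂ) := by
          rw [hNinv]; simp only [if_neg hc1', if_neg h2']
        refine ⟨?_, ?_, ?_, ?_, ?_⟩
        · rw [hNi]; exact hC3 (M i)
        · rw [hNi, hNinvi]; exact hC1 (M i)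
        · rw [hNi, hNinvi]; exact hC2 (M i)
        · rw [hNni, hNi, neg_neg]
        · rw [hNinvni, hNinvi, neg_neg]
      · have h2'' : (-i).val < i.val := by omega
        have hNi : N i = (uC (M (-i))).map (starRingEnd ℂ) := by
          rw [hN]; simp only [if_neg h1, if_neg h2]
        have hNinvi : Ninv i = (vC (M (-i))).map (starRingEnd ℂ) := by
          rw [hNinv]; simp only [if_neg h1, if_neg h2]
        have h2' : ((-i).val < (-(-i)).val) := by rw [neg_neg]; omega
        have hNni : N (-i) = uC (M (-i)) := by rw [hN]; simp only [if_neg hc1', if_pos h2']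
        have hNinvni : Ninv (-i) = vC (M (-i)) := by rw [hNinv]; simp only [if_neg hc1', if_pos h2']
        have hMi : M i = (M (-i)).map (starRingEnd ℂ) := by
          have := hMsym (-i); rw [neg_neg] at this; exact this
        refine ⟨?_, ?_, ?_, ?_, ?_⟩
        · rw [hNi, hMi, ← mapC_mul, ← mapC_mul, hC3, ← hMi]
        · rw [hNi, hNinvi, ← mapC_mul, hC1, mapC_one]
        · rw [hNi, hNinvi, ← mapC_mul, hC2, mapC_one]
        · rw [hNni, hNi, conj_conj_map]
        · rw [hNinvni, hNinvi, conj_conj_map]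
  -- build real W, Winv
  have hWr := ib_real N (fun i => (key i).2.2.2.1)
  have hWinvr := ib_real Ninv (fun i => (key i).2.2.2.2)
  set W : Tensor ℝ n n p := fun k => (ib N k).map Complex.re with hW
  set Winv : Tensor ℝ n n p := fun k => (ib Ninv k).map Complex.re with hWinv
  have hcW : cplx W = ib N := by
    funext k; ext r c
    simp only [cplx, hW, Matrix.map_apply]
    exact Complex.conj_eq_iff_re.mp (hWr k r c)
  have hcWinv : cplx Winv = ib Ninv := by
    funext k; ext r c
    simp only [cplx, hWinv, Matrix.map_apply]
    exact Complex.conj_eq_iff_re.mp (hWinvr k r c)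
  have hfbW : ∀ i, fb (cplx W) i = N i := by intro i; rw [hcW]; exact fb_ib N i
  have hfbWinv : ∀ i, fb (cplx Winv) i = Ninv i := by intro i; rw [hcWinv]; exact fb_ib Ninv i
  refine ⟨W, Winv, ?_, ?_, ?_⟩
  · apply fb_cplx_inj
    intro i
    rw [cplx_tpr, fb_mul, hfbW i, hfbWinv i, fb_tId]
    exact (key i).2.1
  · apply fb_cplx_inj
    intro i
    rw [cplx_tpr, fb_mul, hfbW i, hfbWinv i, fb_tId]
    exact (key i).2.2.1
  · apply fb_cplx_inj
    intro i
    rw [cplx_tpr, fb_mul, cplx_tpr, fb_mul, hfbW i, ← mul_assoc]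
    exact (key i).1
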